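/- Let T and H be graphs on t and h vertices respectively, with independence numbers α(T) and α(H), and suppose h − α(H) − 1 ≥ t − α(T). Then for every n ≥ h − α(H) − 1 + α(T), there is an n-vertex H-free graph containing at least Ω_t((h−α(H))^{t−α(T)} n^{α(T)}) copies of T. Concretely: there is a constant c_t > 0 depending only on t such that the number of copies of T is at least c_t (h−α(H))^{t−α(T)} n^{α(T)}. -/

import Mathlib

open SimpleGraph

/-- Number of unlabeled copies of `H` in `G`, i.e. the number of subgraphs of `G`
whose coercion is isomorphic to `H`. -/
noncomputable def copyCount {α β : Type*} (H : SimpleGraph α) (G : SimpleGraph β) : ℕ :=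
  Nat.card {G' : G.Subgraph // Nonempty (H ≃g G'.coe)}

/-- `G` contains no cycle of length `m`. -/
def CycleFree {V : Type*} (G : SimpleGraph V) (m : ℕ) : Prop :=
  ∀ ⦃v : V⦄ (w : G.Walk v v), w.IsCycle → w.length ≠ m

/-- The number of `(U 0, …, U (k-1))`-cycles in `G`. -/
noncomputable def cCount {V : Type*} (G : SimpleGraph V) {k : ℕ} (U : Fin k → Set V) : ℕ :=
  Nat.card {u : Fin k → V // (∀ i, u i ∈ U i) ∧ ∀ i : Fin k, G.Adj (u i) (u ⟨(i.val + 1) % k, Nat.mod_lt _ i.pos⟩)}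

/-- The number of `(U 0, …, U (k-1))`-paths in `G`. -/
noncomputable def pCount {V : Type*} (G : SimpleGraph V) {k : ℕ} (U : Fin k → Set V) : ℕ :=
  Nat.card {u : Fin k → V // (∀ i, u i ∈ U i) ∧
    ∀ (i : ℕ) (h : i + 1 < k), G.Adj (u ⟨i, Nat.lt_of_succ_lt h⟩) (u ⟨i + 1, h⟩)}

/-- The number of edges of `G` between the disjoint sets `X` and `Y`. -/
noncomputable def eCount {V : Type*} (G : SimpleGraph V) (X Y : Set V) : ℕ :=
  Nat.card {p : V × V // p.1 ∈ X ∧ p.2 ∈ Y ∧ G.Adj p.1 p.2}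

/-- The neighbourhood of `v` inside the set `Y`. -/
def nbhdIn {V : Type*} (G : SimpleGraph V) (v : V) (Y : Set V) : Set V :=
  {y ∈ Y | G.Adj v y}

/-- The independence number of a finite graph. -/
noncomputable def indepNum {W : Type*} [Fintype W] (G : SimpleGraph W) : ℕ :=
  sSup {m | ∃ s : Finset W, (∀ a ∈ s, ∀ b ∈ s, ¬ G.Adj a b) ∧ s.card = m}

lemma indepSet_zero_mem {W : Type*} [Fintype W] (G : SimpleGraph W) :
    0 ∈ {m | ∃ s : Finset W, (∀ a ∈ s, ∀ b ∈ s, ¬ G.Adj a b) ∧ s.card = m} :=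
  ⟨∅, by simp⟩

lemma indepSet_bdd {W : Type*} [Fintype W] (G : SimpleGraph W) :
    BddAbove {m | ∃ s : Finset W, (∀ a ∈ s, ∀ b ∈ s, ¬ G.Adj a b) ∧ s.card = m} := by
  refine ⟨Fintype.card W, ?_⟩
  rintro m ⟨s, -, rfl⟩
  exact s.card_le_univ

lemma indepNum_le_card {W : Type*} [Fintype W] (G : SimpleGraph W) :
    _root_.indepNum G ≤ Fintype.card W := by
  apply csSup_le ⟨0, indepSet_zero_mem G⟩
  rintro m ⟨s, -, rfl⟩
  exact s.card_le_univ

lemma card_le_indepNum {W : Type*} [Fintype W] (G : SimpleGraph W) {s : Finset W}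
    (hs : ∀ a ∈ s, ∀ b ∈ s, ¬ G.Adj a b) : s.card ≤ _root_.indepNum G :=
  le_csSup (indepSet_bdd G) ⟨s, hs, rfl⟩

lemma exists_max_indep {W : Type*} [Fintype W] (G : SimpleGraph W) :
    ∃ s : Finset W, (∀ a ∈ s, ∀ b ∈ s, ¬ G.Adj a b) ∧ s.card = _root_.indepNum G :=
  Nat.sSup_mem ⟨0, indepSet_zero_mem G⟩ (indepSet_bdd G)

def splitG (n m : ℕ) : SimpleGraph (Fin n) where
  Adj v w := v ≠ w ∧ (v.val < m ∨ w.val < m)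
  symm := ⟨by rintro v w ⟨h1, h2⟩; exact ⟨h1.symm, h2.symm⟩⟩
  loopless := ⟨by rintro v ⟨h1, -⟩; exact h1 rfl⟩

lemma splitG_free {γ : Type} [Fintype γ] (H : SimpleGraph γ) (n m h : ℕ)
    (hcard : Fintype.card γ = h) (hm : m + _root_.indepNum H + 1 ≤ h) :
    ¬ ∃ f : H →g splitG n m, Function.Injective f := by
  classical
  rintro ⟨f, hf⟩
  set s : Finset γ := Finset.univ.filter (fun a => m ≤ (f a).val) with hs
  have hind : ∀ a ∈ s, ∀ b ∈ s, ¬ H.Adj a b := by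
    intro a ha b hb hab
    have := f.map_adj hab
    simp only [splitG] at this
    simp only [hs, Finset.mem_filter] at ha hb
    omega
  have h1 : s.card ≤ _root_.indepNum H := card_le_indepNum H hind
  have h2 : sᶜ.card ≤ m := by
    calc sᶜ.card ≤ (Finset.range m).card := by
          apply Finset.card_le_card_of_injOn (fun a => (f a).val)
          · intro a ha
            simp only [hs, Finset.mem_compl, Finset.mem_filter, Finset.mem_univ,
              true_and, not_le] at ha
            simpa using ha
          · intro a _ b _ hab
            exact hf (Fin.ext hab)
      _ = m := Finset.card_range m
  have := Finset.card_add_card_compl s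
  rw [hcard] at this
  omega

instance subgraphFinite {V : Type*} [Finite V] (G : SimpleGraph V) : Finite G.Subgraph := by
  have hinj : Function.Injective (fun G' : G.Subgraph => (G'.verts, G'.Adj)) := by
    intro a b hab
    ext <;> simp_all [SimpleGraph.Subgraph.ext_iff, Prod.ext_iff]
  exact Finite.of_injective _ hinj

lemma count_copies {β : Type} [Fintype β] (T : SimpleGraph β) (S : Finset β)
    (hS : ∀ a ∈ S, ∀ b ∈ S, ¬ T.Adj a b) (n m : ℕ) (hmn : m ≤ n) :
    m.descFactorial (Fintype.card β - S.card) * (n - m).descFactorial S.card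
      ≤ (Fintype.card β).factorial * _root_.copyCount T (splitG n m) := by
  classical
  set D := ((↥(Sᶜ)) ↪ Fin m) × ((↥S) ↪ Fin (n - m)) with hD
  let fmap : D → β → Fin n := fun p a =>
    if h : a ∈ S then ⟨m + (p.2 ⟨a, h⟩).val, by have := (p.2 ⟨a, h⟩).isLt; omega⟩
    else ⟨(p.1 ⟨a, Finset.mem_compl.mpr h⟩).val,
      lt_of_lt_of_le (p.1 ⟨a, Finset.mem_compl.mpr h⟩).isLt hmn⟩
  have hvalS : ∀ (p : D) (a : β) (h : a ∈ S), (fmap p a).val = m + (p.2 ⟨a, h⟩).val := by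
    intro p a h; simp [fmap, h]
  have hvalC : ∀ (p : D) (a : β) (h : a ∉ S),
      (fmap p a).val = (p.1 ⟨a, Finset.mem_compl.mpr h⟩).val := by
    intro p a h; simp [fmap, h]
  have hlt : ∀ (p : D) (a : β), a ∉ S → (fmap p a).val < m := by
    intro p a h
    rw [hvalC p a h]
    exact (p.1 _).isLt
  have hge : ∀ (p : D) (a : β), a ∈ S → m ≤ (fmap p a).val := by
    intro p a h; rw [hvalS p a h]; omega
  have hinj : ∀ p : D, Function.Injective (fmap p) := by
    intro p a b hab
    by_cases ha : a ∈ S <;> by_cases hb : b ∈ S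
    · have := congrArg Fin.val hab
      rw [hvalS p a ha, hvalS p b hb] at this
      have := p.2.injective (Fin.ext (by omega : (p.2 ⟨a, ha⟩).val = (p.2 ⟨b, hb⟩).val))
      exact Subtype.ext_iff.mp this
    · exact absurd (hab ▸ hge p a ha) (not_le.mpr (hlt p b hb))
    · exact absurd (hab ▸ hlt p a ha) (not_lt.mpr (hge p b hb))
    · have := congrArg Fin.val hab
      rw [hvalC p a ha, hvalC p b hb] at this
      have := p.1.injective (Fin.ext this)
      exact Subtype.ext_iff.mp this
  have hadj : ∀ (p : D) (a b : β), T.Adj a b → (splitG n m).Adj (fmap p a) (fmap p b) := by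
    intro p a b hab
    refine ⟨fun e => hab.ne (hinj p e), ?_⟩
    by_cases ha : a ∈ S
    · have hb : b ∉ S := fun hb => hS a ha b hb hab
      exact Or.inr (hlt p b hb)
    · exact Or.inl (hlt p a ha)
  let Φ : D → (splitG n m).Subgraph := fun p =>
    { verts := Set.range (fmap p)
      Adj := fun v w => ∃ a b, T.Adj a b ∧ fmap p a = v ∧ fmap p b = w
      adj_sub := by rintro v w ⟨a, b, hab, rfl, rfl⟩; exact hadj p a b hab
      edge_vert := by rintro v w ⟨a, b, hab, rfl, rfl⟩; exact ⟨a, rfl⟩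
      symm := ⟨by rintro v w ⟨a, b, hab, rfl, rfl⟩; exact ⟨b, a, hab.symm, rfl, rfl⟩⟩ }
  have hiso : ∀ p : D, Nonempty (T ≃g (Φ p).coe) := by
    intro p
    refine ⟨⟨Equiv.ofInjective (fmap p) (hinj p), ?_⟩⟩
    intro a b
    constructor
    · rintro ⟨a', b', h, e1, e2⟩
      rwa [← hinj p e1, ← hinj p e2]
    · intro h
      exact ⟨a, b, h, rfl, rfl⟩
  let Sub := {G' : (splitG n m).Subgraph // Nonempty (T ≃g G'.coe)}
  haveI : Fintype Sub := Fintype.ofFinite _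
  let Φ' : D → Sub := fun p => ⟨Φ p, hiso p⟩
  have hrecover : ∀ p q : D, fmap p = fmap q → p = q := by
    intro p q hpq
    have h1 : p.1 = q.1 := by
      apply Function.Embedding.ext
      intro x
      have hx : x.1 ∉ S := Finset.mem_compl.mp x.2
      have := congrFun hpq x.1
      have := congrArg Fin.val this
      rw [hvalC p x.1 hx, hvalC q x.1 hx] at this
      exact Fin.ext (by simpa using this)
    have h2 : p.2 = q.2 := by
      apply Function.Embedding.ext
      intro x
      have hx : x.1 ∈ S := x.2
      have := congrFun hpq x.1
      have := congrArg Fin.val this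
      rw [hvalS p x.1 hx, hvalS q x.1 hx] at this
      exact Fin.ext (by simpa using this)
    exact Prod.ext h1 h2
  have fiberbound : ∀ y ∈ (Finset.univ : Finset D).image Φ',
      ((Finset.univ : Finset D).filter (fun p => Φ' p = y)).card
        ≤ (Fintype.card β).factorial := by
    intro y hy
    obtain ⟨p₀, -, hp₀⟩ := Finset.mem_image.mp hy
    have hW : Set.range (fmap p₀) = y.1.verts := by rw [← hp₀]
    haveI : Fintype ↥(y.1.verts) := Fintype.ofFinite _
    have hNE : Nonempty (β ≃ ↥(y.1.verts)) :=
      ⟨(Equiv.ofInjective _ (hinj p₀)).trans (Equiv.setCongr hW)⟩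
    let j : D → (β ≃ ↥(y.1.verts)) := fun p =>
      if h : Set.range (fmap p) = y.1.verts then
        (Equiv.ofInjective _ (hinj p)).trans (Equiv.setCongr h)
      else Classical.arbitrary _
    have hjval : ∀ (p : D) (h : Set.range (fmap p) = y.1.verts) (a : β),
        ((j p) a : Fin n) = fmap p a := by
      intro p h a
      simp only [j, dif_pos h]
      rfl
    calc ((Finset.univ : Finset D).filter (fun p => Φ' p = y)).card
        ≤ (Finset.univ : Finset (β ≃ ↥(y.1.verts))).card := by
          apply Finset.card_le_card_of_injOn j (fun p _ => Finset.mem_univ _)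
          intro p hp q hq hjpq
          simp only [Finset.coe_filter, Set.mem_setOf_eq] at hp hq
          have hWp : Set.range (fmap p) = y.1.verts := by rw [← hp.2]
          have hWq : Set.range (fmap q) = y.1.verts := by rw [← hq.2]
          apply hrecover
          funext a
          rw [← hjval p hWp a, ← hjval q hWq a, hjpq]
      _ = (Fintype.card β).factorial := by
          rw [Finset.card_univ, Fintype.card_equiv hNE.some]
  have hmain : (Finset.univ : Finset D).card
      ≤ (Fintype.card β).factorial * ((Finset.univ : Finset D).image Φ').card :=
    Finset.card_le_mul_card_image _ _ fiberbound
  have hcardD : (Finset.univ : Finset D).card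
      = m.descFactorial (Fintype.card β - S.card) * (n - m).descFactorial S.card := by
    rw [Finset.card_univ]
    rw [show (Fintype.card D)
        = Fintype.card ((↥(Sᶜ) ↪ Fin m) × (↥S ↪ Fin (n - m))) from rfl]
    rw [Fintype.card_prod, Fintype.card_embedding_eq, Fintype.card_embedding_eq]
    simp [Finset.card_compl]
  have himg : ((Finset.univ : Finset D).image Φ').card ≤ _root_.copyCount T (splitG n m) := by
    rw [_root_.copyCount, Nat.card_eq_fintype_card]
    exact le_trans (Finset.card_le_card (Finset.subset_univ _)) (le_of_eq (Finset.card_univ))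
  calc m.descFactorial (Fintype.card β - S.card) * (n - m).descFactorial S.card
      = (Finset.univ : Finset D).card := hcardD.symm
    _ ≤ (Fintype.card β).factorial * ((Finset.univ : Finset D).image Φ').card := hmain
    _ ≤ (Fintype.card β).factorial * _root_.copyCount T (splitG n m) :=
        Nat.mul_le_mul_left _ himg

theorem stmt12 (t : ℕ) :
    ∃ c : ℝ, 0 < c ∧
      ∀ (β γ : Type) (_ : Fintype β) (_ : Fintype γ)
        (T : SimpleGraph β) (H : SimpleGraph γ) (h : ℕ),
        Fintype.card β = t → Fintype.card γ = h →
        (t : ℤ) - _root_.indepNum T ≤ (h : ℤ) - _root_.indepNum H - 1 →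
        ∀ n : ℕ, h - _root_.indepNum H - 1 + _root_.indepNum T ≤ n →
          ∃ G : SimpleGraph (Fin n),
            (¬ ∃ f : H →g G, Function.Injective f) ∧
            c * ((h - _root_.indepNum H : ℕ) : ℝ) ^ (t - _root_.indepNum T) * (n : ℝ) ^ (_root_.indepNum T) ≤
              _root_.copyCount T G := by
  refine ⟨(4*((t:ℝ)+1))⁻¹ ^ (2*t+1) * ((t.factorial : ℝ))⁻¹, by positivity, ?_⟩
  intro β γ _ _ T H h hβ hγ hineq n hn
  have hT : _root_.indepNum T ≤ t := hβ ▸ indepNum_le_card T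
  have hH : _root_.indepNum H ≤ h := hγ ▸ indepNum_le_card H
  obtain ⟨S, hSind, hScard⟩ := exists_max_indep T
  have hb1 : _root_.indepNum H + 1 ≤ h := by omega
  have hkb : t - _root_.indepNum T ≤ h - _root_.indepNum H - 1 := by omega
  have hApos : (1:ℝ) ≤ 4*((t:ℝ)+1) := by
    have : (0:ℝ) ≤ (t:ℝ) := Nat.cast_nonneg t
    nlinarith
  have hfpos : (0:ℝ) < (t.factorial : ℝ) := by
    exact_mod_cast t.factorial_pos
  by_cases hbig : 4*(t+1) ≤ n
  · -- large n
    set m := min (h - _root_.indepNum H - 1) (n/2) with hm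
    refine ⟨splitG n m, splitG_free H n m h hγ (by omega), ?_⟩
    have hcount := count_copies T S hSind n m (by omega)
    rw [hβ, hScard] at hcount
    have key1 : h - _root_.indepNum H ≤ 4*(t+1) * (m + 1 - (t - _root_.indepNum T)) := by
      have hdisj : h - _root_.indepNum H ≤ 4*(t+1) ∨
          h - _root_.indepNum H ≤ 4*(m + 1 - (t - _root_.indepNum T)) := by omega
      have h1m : 1 ≤ m + 1 - (t - _root_.indepNum T) := by omega
      rcases hdisj with hd | hd
      · calc h - _root_.indepNum H ≤ 4*(t+1) * 1 := by omega
          _ ≤ 4*(t+1) * (m + 1 - (t - _root_.indepNum T)) := Nat.mul_le_mul_left _ h1m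
      · calc h - _root_.indepNum H ≤ 4 * (m + 1 - (t - _root_.indepNum T)) := hd
          _ ≤ 4*(t+1) * (m + 1 - (t - _root_.indepNum T)) :=
            Nat.mul_le_mul_right _ (by omega)
    have key2 : n ≤ 4*(t+1) * (n - m + 1 - _root_.indepNum T) := by
      have hd : n ≤ 4 * (n - m + 1 - _root_.indepNum T) := by omega
      calc n ≤ 4 * (n - m + 1 - _root_.indepNum T) := hd
        _ ≤ 4*(t+1) * (n - m + 1 - _root_.indepNum T) := Nat.mul_le_mul_right _ (by omega)
    have hNat : (h - _root_.indepNum H)^(t - _root_.indepNum T) * n^(_root_.indepNum T)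
        ≤ (4*(t+1))^(2*t+1) * ((t.factorial) * _root_.copyCount T (splitG n m)) := by
      calc (h - _root_.indepNum H)^(t - _root_.indepNum T) * n^(_root_.indepNum T)
          ≤ ((4*(t+1)) * (m + 1 - (t - _root_.indepNum T)))^(t - _root_.indepNum T)
            * ((4*(t+1)) * (n - m + 1 - _root_.indepNum T))^(_root_.indepNum T) :=
            Nat.mul_le_mul (Nat.pow_le_pow_left key1 _) (Nat.pow_le_pow_left key2 _)
        _ = ((4*(t+1))^(t - _root_.indepNum T) * (4*(t+1))^(_root_.indepNum T))
            * ((m + 1 - (t - _root_.indepNum T))^(t - _root_.indepNum T)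
              * (n - m + 1 - _root_.indepNum T)^(_root_.indepNum T)) := by
            rw [mul_pow (4*(t+1)) (m + 1 - (t - _root_.indepNum T)),
              mul_pow (4*(t+1)) (n - m + 1 - _root_.indepNum T)]
            ring
        _ ≤ (4*(t+1))^(2*t+1)
            * (m.descFactorial (t - _root_.indepNum T) * (n - m).descFactorial (_root_.indepNum T)) := by
            apply Nat.mul_le_mul
            · rw [← pow_add]
              exact Nat.pow_le_pow_right (by omega) (by omega)
            · exact Nat.mul_le_mul (Nat.pow_sub_le_descFactorial m _)
                (Nat.pow_sub_le_descFactorial (n - m) _)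
        _ ≤ (4*(t+1))^(2*t+1) * ((t.factorial) * _root_.copyCount T (splitG n m)) :=
            Nat.mul_le_mul_left _ hcount
    have hR : ((h - _root_.indepNum H : ℕ):ℝ)^(t - _root_.indepNum T) * (n:ℝ)^(_root_.indepNum T)
        ≤ (4*((t:ℝ)+1))^(2*t+1) * ((t.factorial : ℝ) * (_root_.copyCount T (splitG n m) : ℝ)) := by
      have hc := (Nat.cast_le (α := ℝ)).mpr hNat
      push_cast at hc
      convert hc using 2
    calc (4*((t:ℝ)+1))⁻¹ ^ (2*t+1) * ((t.factorial : ℝ))⁻¹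
          * ((h - _root_.indepNum H : ℕ) : ℝ) ^ (t - _root_.indepNum T) * (n : ℝ) ^ (_root_.indepNum T)
        = (((h - _root_.indepNum H : ℕ) : ℝ) ^ (t - _root_.indepNum T) * (n : ℝ) ^ (_root_.indepNum T))
          / ((4*((t:ℝ)+1))^(2*t+1) * (t.factorial : ℝ)) := by
          rw [inv_pow]
          field_simp
          try ring
      _ ≤ ((4*((t:ℝ)+1))^(2*t+1) * ((t.factorial : ℝ) * (_root_.copyCount T (splitG n m) : ℝ)))
          / ((4*((t:ℝ)+1))^(2*t+1) * (t.factorial : ℝ)) := by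
          gcongr
      _ = (_root_.copyCount T (splitG n m) : ℝ) := by
          field_simp
  · -- small n
    set m := h - _root_.indepNum H - 1 with hm
    refine ⟨splitG n m, splitG_free H n m h hγ (by omega), ?_⟩
    have hcount := count_copies T S hSind n m (by omega)
    rw [hβ, hScard] at hcount
    have hpos1 : 0 < m.descFactorial (t - _root_.indepNum T) :=
      lt_of_lt_of_le (Nat.pow_pos (by omega)) (Nat.pow_sub_le_descFactorial m _)
    have hpos2 : 0 < (n - m).descFactorial (_root_.indepNum T) :=
      lt_of_lt_of_le (Nat.pow_pos (by omega)) (Nat.pow_sub_le_descFactorial (n-m) _)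
    have hC : 1 ≤ _root_.copyCount T (splitG n m) := by
      rcases Nat.eq_zero_or_pos (_root_.copyCount T (splitG n m)) with h0 | h0
      · rw [h0, mul_zero] at hcount
        have hprod := Nat.mul_pos hpos1 hpos2
        omega
      · exact h0
    have hX : ((h - _root_.indepNum H : ℕ):ℝ) ≤ 4*((t:ℝ)+1) := by
      have : (h - _root_.indepNum H : ℕ) ≤ 4*(t+1) := by omega
      calc ((h - _root_.indepNum H : ℕ):ℝ) ≤ ((4*(t+1) : ℕ):ℝ) := by exact_mod_cast this
        _ = 4*((t:ℝ)+1) := by push_cast; ring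
    have hY : (n:ℝ) ≤ 4*((t:ℝ)+1) := by
      have : n ≤ 4*(t+1) := by omega
      calc (n:ℝ) ≤ ((4*(t+1) : ℕ):ℝ) := by exact_mod_cast this
        _ = 4*((t:ℝ)+1) := by push_cast; ring
    have hAB : (4*((t:ℝ)+1))^(t - _root_.indepNum T) * (4*((t:ℝ)+1))^(_root_.indepNum T)
        ≤ (4*((t:ℝ)+1))^(2*t+1) := by
      rw [← pow_add]
      exact pow_le_pow_right₀ hApos (by omega)
    have hone : (1:ℝ) ≤ (t.factorial : ℝ) := Nat.one_le_cast.mpr t.factorial_pos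
    calc (4*((t:ℝ)+1))⁻¹ ^ (2*t+1) * ((t.factorial : ℝ))⁻¹
          * ((h - _root_.indepNum H : ℕ) : ℝ) ^ (t - _root_.indepNum T) * (n : ℝ) ^ (_root_.indepNum T)
        ≤ (4*((t:ℝ)+1))⁻¹ ^ (2*t+1) * ((t.factorial : ℝ))⁻¹
          * (4*((t:ℝ)+1)) ^ (t - _root_.indepNum T) * (4*((t:ℝ)+1)) ^ (_root_.indepNum T) := by
          gcongr
      _ = ((4*((t:ℝ)+1)) ^ (t - _root_.indepNum T) * (4*((t:ℝ)+1)) ^ (_root_.indepNum T))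
          * (((4*((t:ℝ)+1))^(2*t+1))⁻¹ * ((t.factorial : ℝ))⁻¹) := by
          rw [inv_pow]; ring
      _ ≤ ((4*((t:ℝ)+1))^(2*t+1))
          * (((4*((t:ℝ)+1))^(2*t+1))⁻¹ * ((t.factorial : ℝ))⁻¹) :=
          mul_le_mul_of_nonneg_right hAB (by positivity)
      _ = ((t.factorial : ℝ))⁻¹ := by
          field_simp
      _ ≤ 1 := inv_le_one_of_one_le₀ hone
      _ ≤ (_root_.copyCount T (splitG n m) : ℝ) := by exact_mod_cast hC
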